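/- arXiv:1003.4699 — 5 statements merged into one kernel-verified Lean document; each statement's English description precedes it below -/
import Mathlib

section
/- Let g be a formal power series with nonnegative real coefficients and g(0) = 0. Then there exists a unique formal power series f with f(0) = 0 satisfying f(z) = z·exp(g(f(z))), and f has nonnegative coefficients. -/
open PowerSeries

/-- Composition `f ∘ g` of formal power series (meaningful when `g` has zero constant
term): the coefficient of order `n` only involves `g^k` for `k ≤ n`. -/
noncomputable def psComp (f g : PowerSeries ℝ) : PowerSeries ℝ :=
  PowerSeries.mk fun n =>
    PowerSeries.coeff n (∑ k ∈ Finset.range (n + 1), PowerSeries.C (PowerSeries.coeff k f) * g ^ k)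

lemma coeff_psComp (A B : PowerSeries ℝ) (n : ℕ) :
    PowerSeries.coeff n (psComp A B)
      = ∑ k ∈ Finset.range (n + 1), PowerSeries.coeff k A * PowerSeries.coeff n (B ^ k) := by
  simp [psComp]

lemma pow_coeff_congr {B B' : PowerSeries ℝ} {n : ℕ}
    (h : ∀ i ≤ n, PowerSeries.coeff i B = PowerSeries.coeff i B') (k : ℕ) :
    PowerSeries.coeff n (B ^ k) = PowerSeries.coeff n (B' ^ k) := by
  have hd : (PowerSeries.X : PowerSeries ℝ) ^ (n + 1) ∣ B - B' := by
    rw [PowerSeries.X_pow_dvd_iff]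
    intro m hm
    simp [h m (Nat.lt_succ_iff.mp hm)]
  have hd2 : (PowerSeries.X : PowerSeries ℝ) ^ (n + 1) ∣ B ^ k - B' ^ k :=
    hd.trans (sub_dvd_pow_sub_pow B B' k)
  have := (PowerSeries.X_pow_dvd_iff.mp hd2) n (Nat.lt_succ_self n)
  rw [map_sub] at this
  linarith

lemma psComp_coeff_congr (A : PowerSeries ℝ) {B B' : PowerSeries ℝ} {n : ℕ}
    (h : ∀ i ≤ n, PowerSeries.coeff i B = PowerSeries.coeff i B') :
    PowerSeries.coeff n (psComp A B) = PowerSeries.coeff n (psComp A B') := by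
  rw [coeff_psComp, coeff_psComp]
  exact Finset.sum_congr rfl fun k _ => by rw [pow_coeff_congr h k]

lemma E_coeff_congr (g : PowerSeries ℝ) {B B' : PowerSeries ℝ} {n : ℕ}
    (h : ∀ i ≤ n, PowerSeries.coeff i B = PowerSeries.coeff i B') :
    PowerSeries.coeff n (psComp (PowerSeries.exp ℝ) (psComp g B))
      = PowerSeries.coeff n (psComp (PowerSeries.exp ℝ) (psComp g B')) := by
  apply psComp_coeff_congr
  intro i hi
  exact psComp_coeff_congr g fun j hj => h j (hj.trans hi)

lemma pow_coeff_nonneg {B : PowerSeries ℝ} (h : ∀ i, 0 ≤ PowerSeries.coeff i B) (k : ℕ) :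
    ∀ n, 0 ≤ PowerSeries.coeff n (B ^ k) := by
  induction k with
  | zero =>
    intro n
    rw [pow_zero, PowerSeries.coeff_one]
    split <;> norm_num
  | succ k ih =>
    intro n
    rw [pow_succ, PowerSeries.coeff_mul]
    exact Finset.sum_nonneg fun p _ => mul_nonneg (ih p.1) (h p.2)

lemma psComp_coeff_nonneg {A B : PowerSeries ℝ} (hA : ∀ i, 0 ≤ PowerSeries.coeff i A)
    (hB : ∀ i, 0 ≤ PowerSeries.coeff i B) (n : ℕ) :
    0 ≤ PowerSeries.coeff n (psComp A B) := by
  rw [coeff_psComp]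
  exact Finset.sum_nonneg fun k _ => mul_nonneg (hA k) (pow_coeff_nonneg hB k n)

lemma exp_coeff_nonneg (n : ℕ) : 0 ≤ PowerSeries.coeff n (PowerSeries.exp ℝ) := by
  simp [PowerSeries.coeff_exp]

noncomputable def solCoeff (g : PowerSeries ℝ) : ℕ → ℝ
  | 0 => 0
  | n + 1 => PowerSeries.coeff n (psComp (PowerSeries.exp ℝ)
      (psComp g (PowerSeries.mk fun k => if h : k < n + 1 then solCoeff g k else 0)))

/-- For a formal power series `g` with nonnegative coefficients and `g(0) = 0`,
there is a unique formal power series `f` with `f(0) = 0` satisfying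
`f(z) = z·exp(g(f(z)))`, and `f` has nonnegative coefficients. -/
theorem exists_unique_solution_tree_like_equation
    (g : PowerSeries ℝ) (hg : ∀ n, 0 ≤ PowerSeries.coeff n g)
    (hg0 : PowerSeries.constantCoeff g = 0) :
    (∃! f : PowerSeries ℝ, PowerSeries.constantCoeff f = 0 ∧
        f = PowerSeries.X * psComp (PowerSeries.exp ℝ) (psComp g f)) ∧
      ∀ f : PowerSeries ℝ, PowerSeries.constantCoeff f = 0 →
        f = PowerSeries.X * psComp (PowerSeries.exp ℝ) (psComp g f) →
        ∀ n, 0 ≤ PowerSeries.coeff n f := by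
  set f₀ : PowerSeries ℝ := PowerSeries.mk (solCoeff g) with hf₀
  have hsol : PowerSeries.constantCoeff f₀ = 0 ∧
      f₀ = PowerSeries.X * psComp (PowerSeries.exp ℝ) (psComp g f₀) := by
    constructor
    · simp [hf₀, solCoeff]
    · ext n
      cases n with
      | zero => simp [hf₀, solCoeff]
      | succ n =>
        rw [PowerSeries.coeff_succ_X_mul, hf₀, PowerSeries.coeff_mk, solCoeff]
        apply E_coeff_congr
        intro i hi
        simp [Nat.lt_succ_iff.mpr hi, Nat.not_lt.mpr hi]
  constructor
  · refine ⟨f₀, hsol, ?_⟩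
    intro f ⟨hc, he⟩
    ext n
    induction n using Nat.strong_induction_on with
    | _ n ih =>
      cases n with
      | zero => simp [hc, hf₀, solCoeff]
      | succ n =>
        rw [he, hsol.2, PowerSeries.coeff_succ_X_mul, PowerSeries.coeff_succ_X_mul]
        exact E_coeff_congr g fun i hi => ih i (Nat.lt_succ_of_le hi)
  · intro f hc he n
    induction n using Nat.strong_induction_on with
    | _ n ih =>
      cases n with
      | zero => simp [hc]
      | succ n =>
        rw [he, PowerSeries.coeff_succ_X_mul]
        set ft : PowerSeries ℝ := PowerSeries.mk fun k => if k ≤ n then PowerSeries.coeff k f else 0 with hft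
        have hft_nonneg : ∀ i, 0 ≤ PowerSeries.coeff i ft := by
          intro i
          rw [hft, PowerSeries.coeff_mk]
          split
          · exact ih i (Nat.lt_succ_of_le ‹_›)
          · exact le_refl 0
        have : PowerSeries.coeff n (psComp (PowerSeries.exp ℝ) (psComp g f))
            = PowerSeries.coeff n (psComp (PowerSeries.exp ℝ) (psComp g ft)) := by
          apply E_coeff_congr
          intro i hi
          simp [hft, hi]
        rw [this]
        exact psComp_coeff_nonneg exp_coeff_nonneg
          (fun i => psComp_coeff_nonneg hg hft_nonneg i) n
end

section
/- Let g(y) be a power series with nonnegative coefficients and positive radius of convergence η such that g'(y) → ∞ as y → η⁻. Let f(z) be the unique power series solution of f(z) = z·exp(g(f(z))) with f(0)=0, let ρ be the radius of convergence of f, and suppose f extends continuously to [0,ρ] with τ := f(ρ) < ∞. Then τ < η. -/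
open Filter Set Topology ENNReal

noncomputable def seriesRadius (c : ℕ → ℝ) : ℝ≥0∞ :=
  ⨆ (r : NNReal) (_ : Summable fun n => |c n| * (r : ℝ) ^ n), (r : ℝ≥0∞)

lemma aux_pow_ineq {a b : ℝ} (ha : 0 ≤ a) (hab : a ≤ b) :
    ∀ n : ℕ, ((n : ℝ) + 1) * a ^ n * (b - a) ≤ b ^ (n + 1) - a ^ (n + 1) := by
  intro n
  induction n with
  | zero => simp
  | succ n ih =>
    have hb : 0 ≤ b := ha.trans hab
    have hX : 0 ≤ ((n : ℝ) + 1) * a ^ n * (b - a) :=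
      mul_nonneg (mul_nonneg (by positivity) (pow_nonneg ha n)) (sub_nonneg.mpr hab)
    have h := mul_le_mul hab ih hX hb
    have e1 : b ^ (n + 1 + 1) - a ^ (n + 1 + 1)
        = b * (b ^ (n + 1) - a ^ (n + 1)) + a ^ (n + 1) * (b - a) := by ring
    push_cast
    have e2 : ((n : ℝ) + 1 + 1) * a ^ (n + 1) * (b - a)
        = a * (((n : ℝ) + 1) * a ^ n * (b - a)) + a ^ (n + 1) * (b - a) := by ring
    rw [e1, e2]
    linarith

lemma aux_summable {c : ℕ → ℝ} (hc : ∀ n, 0 ≤ c n) {R x : ℝ}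
    (hrad : seriesRadius c = ENNReal.ofReal R) (hx : 0 ≤ x) (hxR : x < R) :
    Summable fun n => c n * x ^ n := by
  have hR : 0 < R := hx.trans_lt hxR
  have h1 : ENNReal.ofReal x < seriesRadius c := by
    rw [hrad]
    exact (ENNReal.ofReal_lt_ofReal_iff hR).mpr hxR
  rw [seriesRadius, lt_iSup_iff] at h1
  obtain ⟨r, hr⟩ := h1
  by_cases hs : Summable fun n => |c n| * (r : ℝ) ^ n
  · simp only [hs, iSup_pos] at hr
    have hxr : x ≤ (r : ℝ) := by
      by_contra hcon
      push_neg at hcon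
      have : (r : ℝ≥0∞) ≤ ENNReal.ofReal x := by
        rw [← ENNReal.ofReal_coe_nnreal]
        exact ENNReal.ofReal_le_ofReal hcon.le
      exact absurd hr (not_lt.mpr this)
    refine hs.of_nonneg_of_le (fun n => mul_nonneg (hc n) (pow_nonneg hx n)) (fun n => ?_)
    rw [abs_of_nonneg (hc n)]
    exact mul_le_mul_of_nonneg_left (pow_le_pow_left₀ hx hxr n) (hc n)
  · simp only [hs, iSup_false] at hr
    exact absurd hr (by simp)

/-- Subcriticality criterion.  Let `g(y) = Σ gc_n yⁿ` have nonnegative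
coefficients, `g(0)=0`, radius of convergence `η ∈ (0,∞)`, and `g'(y) → ∞` as `y → η⁻`.
Let `f(z) = Σ fc_n zⁿ` (nonnegative coefficients, `f(0)=0`) solve `f(z) = z·exp(g(f(z)))`
on `(0,ρ)`, where `ρ ∈ (0,∞)` is the radius of convergence of `f`, and suppose
`f(z) → τ < ∞` as `z → ρ⁻`.  Then `τ < η`. -/
theorem subcritical_criterion
    (gc fc : ℕ → ℝ)
    (hgc : ∀ n, 0 ≤ gc n) (hgc0 : gc 0 = 0)
    (hfc : ∀ n, 0 ≤ fc n) (hfc0 : fc 0 = 0)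
    (η ρ τ : ℝ) (hη : 0 < η) (hρ : 0 < ρ)
    (hradg : seriesRadius gc = ENNReal.ofReal η)
    (hradf : seriesRadius fc = ENNReal.ofReal ρ)
    (G : ℝ → ℝ) (hG : ∀ y, G y = ∑' n, gc n * y ^ n)
    (F : ℝ → ℝ) (hF : ∀ z, F z = ∑' n, fc n * z ^ n)
    -- g'(y) → ∞ as y → η⁻ (the derivative series of g):
    (hg'div : Tendsto (fun y => ∑' (n : ℕ), ((n : ℝ) + 1) * gc (n + 1) * y ^ n)
      (𝓝[<] η) atTop)
    -- the functional equation f(z) = z exp(g(f(z))) on (0,ρ):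
    (heq : ∀ z ∈ Ioo 0 ρ, F z = z * Real.exp (G (F z)))
    -- f extends continuously to ρ with value τ:
    (hτ : Tendsto F (𝓝[<] ρ) (𝓝 τ)) :
    τ < η := by
  by_contra hcon
  push_neg at hcon  -- hcon : η ≤ τ
  -- summability helpers
  have hsumf : ∀ z : ℝ, 0 ≤ z → z < ρ → Summable fun n => fc n * z ^ n :=
    fun z hz hzρ => aux_summable hfc hradf hz hzρ
  have hsumg : ∀ y : ℝ, 0 ≤ y → y < η → Summable fun n => gc n * y ^ n :=
    fun y hy hyη => aux_summable hgc hradg hy hyη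
  -- F 0 = 0
  have hF0 : F 0 = 0 := by
    rw [hF]
    rw [tsum_eq_single 0 (fun n hn => by simp [zero_pow hn])]
    simp [hfc0]
  -- F monotone
  have hFmono : ∀ z z' : ℝ, 0 ≤ z → z ≤ z' → z' < ρ → F z ≤ F z' := by
    intro z z' hz hzz hz'
    rw [hF, hF]
    refine Summable.tsum_le_tsum (fun n => ?_) (hsumf z hz (lt_of_le_of_lt hzz hz'))
      (hsumf z' (hz.trans hzz) hz')
    exact mul_le_mul_of_nonneg_left (pow_le_pow_left₀ hz hzz n) (hfc n)
  -- derivative divergence: interval form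
  have hev : ∀ᶠ y in 𝓝[<] η, 2 / η < ∑' (n : ℕ), ((n : ℝ) + 1) * gc (n + 1) * y ^ n :=
    hg'div.eventually_gt_atTop (2 / η)
  rw [eventually_iff, mem_nhdsLT_iff_exists_Ioo_subset] at hev
  obtain ⟨y₀, hy₀η, hy₀⟩ := hev
  set c : ℝ := max y₀ (η / 2) with hc
  have hcη : c < η := max_lt hy₀η (by linarith)
  have hchalf : η / 2 ≤ c := le_max_right _ _
  set v₁ : ℝ := (2 * c + η) / 3 with hv₁def
  set v₂ : ℝ := (c + 2 * η) / 3 with hv₂def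
  have hcv₁ : c < v₁ := by rw [hv₁def]; linarith
  have hv₁₂ : v₁ < v₂ := by rw [hv₁def, hv₂def]; linarith
  have hv₂η : v₂ < η := by rw [hv₂def]; linarith
  have hv₁half : η / 2 < v₁ := lt_of_le_of_lt hchalf hcv₁
  have hv₁pos : 0 < v₁ := by linarith
  have hv₂pos : 0 < v₂ := by linarith
  have hv₁η : v₁ < η := hv₁₂.trans hv₂η
  -- find z* with F z* > v₂
  have hv₂τ : v₂ < τ := lt_of_lt_of_le hv₂η hcon
  have h1 : ∀ᶠ z in 𝓝[<] ρ, v₂ < F z := hτ.eventually (eventually_gt_nhds hv₂τ)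
  have h2 : Ioo 0 ρ ∈ 𝓝[<] ρ := Ioo_mem_nhdsLT_of_mem ⟨hρ, le_refl ρ⟩
  obtain ⟨zs, hzsv, hzs0, hzsρ⟩ : ∃ z, v₂ < F z ∧ 0 < z ∧ z < ρ := by
    have := (h1.and (eventually_iff.mpr (mem_of_superset h2 (fun z hz => hz)))).exists
    obtain ⟨z, hza, hzb⟩ := this
    exact ⟨z, hza, hzb.1, hzb.2⟩
  -- continuity of F on [0, zs]
  obtain ⟨r, hzr, hrρ⟩ := exists_between hzsρ
  have hr0 : 0 ≤ r := le_of_lt (hzs0.trans hzr)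
  have hFcont : ContinuousOn F (Icc 0 zs) := by
    have hc1 : ContinuousOn (fun z : ℝ => ∑' n, fc n * z ^ n) (Icc 0 zs) := by
      refine continuousOn_tsum (fun n => (continuousOn_const.mul ((continuous_pow n).continuousOn)))
        (hsumf r hr0 hrρ) (fun n z hz => ?_)
      rw [Real.norm_eq_abs, abs_mul, abs_of_nonneg (hfc n), abs_pow, abs_of_nonneg hz.1]
      exact mul_le_mul_of_nonneg_left (pow_le_pow_left₀ hz.1 (hz.2.trans hzr.le) n) (hfc n)
    exact hc1.congr (fun z _ => hF z)
  -- IVT: obtain z₁, z₂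
  have hivt := intermediate_value_Icc (le_of_lt hzs0) hFcont
  obtain ⟨z₁, hz₁mem, hz₁⟩ := hivt ⟨by rw [hF0]; exact hv₁pos.le, le_of_lt (hv₁₂.trans hzsv)⟩
  obtain ⟨z₂, hz₂mem, hz₂⟩ := hivt ⟨by rw [hF0]; exact hv₂pos.le, le_of_lt hzsv⟩
  have hz₁pos : 0 < z₁ := by
    rcases hz₁mem.1.lt_or_eq with h | h
    · exact h
    · rw [← h, hF0] at hz₁; exact absurd hz₁.symm (ne_of_gt hv₁pos)
  have hz₂pos : 0 < z₂ := by
    rcases hz₂mem.1.lt_or_eq with h | h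
    · exact h
    · rw [← h, hF0] at hz₂; exact absurd hz₂.symm (ne_of_gt hv₂pos)
  have hz₁ρ : z₁ < ρ := lt_of_le_of_lt hz₁mem.2 hzsρ
  have hz₂ρ : z₂ < ρ := lt_of_le_of_lt hz₂mem.2 hzsρ
  have he₁ : v₁ = z₁ * Real.exp (G v₁) := by
    have := heq z₁ ⟨hz₁pos, hz₁ρ⟩; rwa [hz₁] at this
  have he₂ : v₂ = z₂ * Real.exp (G v₂) := by
    have := heq z₂ ⟨hz₂pos, hz₂ρ⟩; rwa [hz₂] at this
  -- key: log v₂ - log v₁ < G v₂ - G v₁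
  have hsum1 := hsumg v₁ hv₁pos.le hv₁η
  have hsum2 := hsumg v₂ hv₂pos.le hv₂η
  set D : ℕ → ℝ := fun n => gc n * (v₂ ^ n - v₁ ^ n) with hD
  have hDnonneg : ∀ n, 0 ≤ D n := fun n =>
    mul_nonneg (hgc n) (sub_nonneg.mpr (pow_le_pow_left₀ hv₁pos.le hv₁₂.le n))
  have hDsum : Summable D := by
    have := hsum2.sub hsum1
    refine this.congr (fun n => ?_)
    rw [hD]; ring
  have hGdiff : G v₂ - G v₁ = ∑' n, D n := by
    rw [hG, hG, ← Summable.tsum_sub hsum2 hsum1]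
    congr 1; ext n; rw [hD]; ring
  set E : ℕ → ℝ := fun n => ((n : ℝ) + 1) * gc (n + 1) * v₁ ^ n with hE
  have hEnonneg : ∀ n, 0 ≤ E n := fun n =>
    mul_nonneg (mul_nonneg (by positivity) (hgc (n + 1))) (pow_nonneg hv₁pos.le n)
  have hkey : ∀ n, (v₂ - v₁) * E n ≤ D (n + 1) := by
    intro n
    have h := mul_le_mul_of_nonneg_left (aux_pow_ineq hv₁pos.le hv₁₂.le n) (hgc (n + 1))
    calc (v₂ - v₁) * E n = gc (n + 1) * (((n : ℝ) + 1) * v₁ ^ n * (v₂ - v₁)) := by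
          rw [hE]; ring
      _ ≤ gc (n + 1) * (v₂ ^ (n + 1) - v₁ ^ (n + 1)) := h
      _ = D (n + 1) := by rw [hD]
  have hDshift : Summable fun n => D (n + 1) := by
    exact hDsum.comp_injective (add_left_injective 1)
  have hv₂₁pos : 0 < v₂ - v₁ := sub_pos.mpr hv₁₂
  have hEsum : Summable E := by
    refine Summable.of_nonneg_of_le hEnonneg (fun n => ?_) (hDshift.div_const (v₂ - v₁))
    rw [le_div_iff₀ hv₂₁pos]
    calc E n * (v₂ - v₁) = (v₂ - v₁) * E n := by ring
      _ ≤ D (n + 1) := hkey n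
  have hstep1 : (v₂ - v₁) * (∑' n, E n) ≤ ∑' n, D (n + 1) := by
    rw [← tsum_mul_left]
    exact Summable.tsum_le_tsum hkey (hEsum.mul_left _) hDshift
  have hstep2 : (∑' n, D (n + 1)) ≤ ∑' n, D n :=
    Summable.tsum_le_tsum_of_inj (fun n => n + 1) (add_left_injective 1)
      (fun m _ => hDnonneg m) (fun n => le_refl _) hDshift hDsum
  have hg'v₁ : 2 / η < ∑' n, E n := by
    have := hy₀ ⟨lt_of_le_of_lt (le_max_left _ _) hcv₁, hv₁η⟩
    simpa [hE] using this
  have hinv : v₁⁻¹ < 2 / η := by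
    have h := inv_strictAnti₀ (half_pos hη) hv₁half
    exact lt_of_lt_of_eq h (by rw [inv_div])
  have hlogle : Real.log (v₂ / v₁) ≤ (v₂ - v₁) / v₁ := by
    have h := Real.log_le_sub_one_of_pos (div_pos hv₂pos hv₁pos)
    rwa [div_sub_one (ne_of_gt hv₁pos)] at h
  have hlog : Real.log v₂ - Real.log v₁ < G v₂ - G v₁ := by
    rw [hGdiff, ← Real.log_div (ne_of_gt hv₂pos) (ne_of_gt hv₁pos)]
    have h2 : (v₂ - v₁) / v₁ < (v₂ - v₁) * (2 / η) := by
      rw [div_eq_mul_inv, mul_comm (v₂ - v₁) v₁⁻¹, mul_comm (v₂ - v₁) (2/η)]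
      exact mul_lt_mul_of_pos_right hinv hv₂₁pos
    have h3 : (v₂ - v₁) * (2 / η) < (v₂ - v₁) * ∑' n, E n :=
      mul_lt_mul_of_pos_left hg'v₁ hv₂₁pos
    linarith
  -- conclude z₂ < z₁
  have hz₁eq : z₁ = Real.exp (Real.log v₁ - G v₁) := by
    rw [Real.exp_sub, Real.exp_log hv₁pos, eq_div_iff (Real.exp_ne_zero _)]
    linarith [he₁]
  have hz₂eq : z₂ = Real.exp (Real.log v₂ - G v₂) := by
    rw [Real.exp_sub, Real.exp_log hv₂pos, eq_div_iff (Real.exp_ne_zero _)]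
    linarith [he₂]
  have hz₂₁ : z₂ < z₁ := by
    rw [hz₁eq, hz₂eq]
    exact Real.exp_lt_exp.mpr (by linarith)
  have := hFmono z₂ z₁ hz₂pos.le hz₂₁.le hz₁ρ
  rw [hz₁, hz₂] at this
  linarith
end

section
/- Let g(y) have nonnegative coefficients with g(0)=0 and let f satisfy f(z) = z·exp(g(f(z))) with f(0)=0, f having nonnegative coefficients and radius of convergence ρ > 0. Then for all z ∈ (0,ρ), f'(z) = f(z)/z + g'(f(z))·f'(z)·f(z); in particular g'(f(z)) ≤ 1/f(z) for z ∈ (0,ρ) where f(z) > 0. -/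
set_option maxHeartbeats 1000000


open Filter Set Topology ENNReal

/-- Summability of the derived series at a strictly smaller radius. -/
lemma summable_deriv_aux (c : ℕ → ℝ) {r' r : ℝ} (h0 : 0 ≤ r') (hrr : r' < r)
    (hs : Summable fun n => |c n| * r ^ n) :
    Summable fun n : ℕ => ((n : ℝ) + 1) * |c (n + 1)| * r' ^ n := by
  have hr : 0 < r := lt_of_le_of_lt h0 hrr
  set q : ℝ := r' / r with hq
  have hq0 : 0 ≤ q := div_nonneg h0 hr.le
  have hq1 : q < 1 := (div_lt_one hr).2 hrr
  have hgeo : Summable fun n : ℕ => ((n : ℝ) + 1) * q ^ n := by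
    have h1 : Summable fun n : ℕ => (n : ℝ) ^ (1 : ℕ) * q ^ n :=
      summable_pow_mul_geometric_of_norm_lt_one 1 (by rwa [Real.norm_eq_abs, abs_of_nonneg hq0])
    have h2 : Summable fun n : ℕ => q ^ n := summable_geometric_of_lt_one hq0 hq1
    simpa [add_mul, pow_one] using h1.add h2
  obtain ⟨M, hM⟩ : ∃ M : ℝ, ∀ n : ℕ, ((n : ℝ) + 1) * q ^ n ≤ M := by
    obtain ⟨M, hM⟩ := hgeo.tendsto_atTop_zero.bddAbove_range
    exact ⟨M, fun n => hM ⟨n, rfl⟩⟩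
  have hshift : Summable fun n : ℕ => |c (n + 1)| * r ^ (n + 1) :=
    (summable_nat_add_iff 1).2 hs
  have h3 : Summable fun n : ℕ => |c (n + 1)| * r ^ n := by
    have := hshift.mul_left (1 / r)
    apply this.congr
    intro n
    field_simp
    ring
  have hM' : Summable fun n : ℕ => M * (|c (n + 1)| * r ^ n) := h3.mul_left M
  apply Summable.of_nonneg_of_le (fun n => ?_) (fun n => ?_) hM'
  · positivity
  · have hqr : q ^ n * r ^ n = r' ^ n := by
      rw [← mul_pow, hq, div_mul_cancel₀ _ hr.ne']
    have key : ((n : ℝ) + 1) * |c (n + 1)| * r' ^ n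
        = (((n : ℝ) + 1) * q ^ n) * (|c (n + 1)| * r ^ n) := by
      rw [← hqr]; ring
    rw [key]
    apply mul_le_mul_of_nonneg_right (hM n)
    positivity

/-- Differentiating a one-variable power series inside its radius of convergence. -/
lemma hasDerivAt_tsum_pow (c : ℕ → ℝ) {r x : ℝ} (hx : |x| < r)
    (hs : Summable fun n => |c n| * r ^ n) :
    HasDerivAt (fun y : ℝ => ∑' n : ℕ, c n * y ^ n)
      (∑' n : ℕ, ((n : ℝ) + 1) * c (n + 1) * x ^ n) x := by
  have hr : 0 < r := lt_of_le_of_lt (abs_nonneg x) hx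
  set r' : ℝ := (|x| + r) / 2 with hr'def
  have hxr' : |x| < r' := by simp only [hr'def]; linarith
  have hr'r : r' < r := by simp only [hr'def]; linarith
  have hr'0 : 0 ≤ r' := le_trans (abs_nonneg x) hxr'.le
  set u : ℕ → ℝ := fun n => (n : ℝ) * |c n| * r' ^ (n - 1) with hu_def
  have hu : Summable u := by
    rw [← summable_nat_add_iff 1]
    have := summable_deriv_aux c hr'0 hr'r hs
    apply this.congr
    intro n
    simp [hu_def]
  set g' : ℕ → ℝ → ℝ := fun n y => c n * ((n : ℝ) * y ^ (n - 1)) with hg'_def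
  have hderiv : ∀ (n : ℕ) (y : ℝ), y ∈ Metric.ball (0 : ℝ) r' →
      HasDerivAt (fun y : ℝ => c n * y ^ n) (g' n y) y := by
    intro n y _
    exact (hasDerivAt_pow n y).const_mul (c n)
  have hbound : ∀ (n : ℕ) (y : ℝ), y ∈ Metric.ball (0 : ℝ) r' → ‖g' n y‖ ≤ u n := by
    intro n y hy
    have hyr : |y| ≤ r' := by
      have := mem_ball_zero_iff.1 hy
      rw [Real.norm_eq_abs] at this
      exact this.le
    simp only [hg'_def, hu_def, Real.norm_eq_abs, abs_mul, Nat.abs_cast]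
    have h1 : |y| ^ (n - 1) ≤ r' ^ (n - 1) := pow_le_pow_left₀ (abs_nonneg y) hyr _
    calc |c n| * ((n : ℝ) * |y ^ (n - 1)|) = (n : ℝ) * |c n| * |y| ^ (n - 1) := by
          rw [abs_pow]; ring
      _ ≤ (n : ℝ) * |c n| * r' ^ (n - 1) := by
          apply mul_le_mul_of_nonneg_left h1; positivity
  have hx0 : x ∈ Metric.ball (0 : ℝ) r' := by
    rw [mem_ball_zero_iff, Real.norm_eq_abs]; exact hxr'
  have hsum0 : Summable fun n : ℕ => c n * x ^ n := by
    apply Summable.of_norm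
    apply Summable.of_nonneg_of_le (fun n => norm_nonneg _) (fun n => ?_) hs
    rw [Real.norm_eq_abs, abs_mul, abs_pow]
    apply mul_le_mul_of_nonneg_left _ (abs_nonneg _)
    exact pow_le_pow_left₀ (abs_nonneg x) (le_of_lt (lt_trans hxr' hr'r)) _
  have main : HasDerivAt (fun y : ℝ => ∑' n : ℕ, c n * y ^ n) (∑' n : ℕ, g' n x) x :=
    hasDerivAt_tsum_of_isPreconnected hu Metric.isOpen_ball
      (convex_ball (0:ℝ) r').isPreconnected hderiv hbound hx0 hsum0 hx0
  convert main using 1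
  have hsumg' : Summable fun n : ℕ => g' n x :=
    Summable.of_norm (Summable.of_nonneg_of_le (fun n => norm_nonneg _)
      (fun n => hbound n x hx0) hu)
  rw [Summable.tsum_eq_zero_add hsumg']
  simp only [hg'_def]
  rw [show (c 0 * (((0 : ℕ) : ℝ) * x ^ ((0 : ℕ) - 1))) = 0 by simp, zero_add]
  apply tsum_congr
  intro n
  push_cast
  ring_nf

/-- If `f(z) = z·exp(g(f(z)))` with `f, g` power series with nonnegative
coefficients, `f(0) = g(0) = 0` and `ρ > 0` the radius of convergence of `f`, then for all
`z ∈ (0,ρ)` we have `f'(z) = f(z)/z + g'(f(z))·f'(z)·f(z)`; in particular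
`g'(f(z)) ≤ 1/f(z)` wherever `f(z) > 0` on `(0,ρ)`. -/
theorem derivative_identity_of_tree_like_equation
    (gc fc : ℕ → ℝ)
    (hgc : ∀ n, 0 ≤ gc n) (hgc0 : gc 0 = 0)
    (hfc : ∀ n, 0 ≤ fc n) (hfc0 : fc 0 = 0)
    (ρ : ℝ) (hρ : 0 < ρ)
    (hradf : seriesRadius fc = ENNReal.ofReal ρ)
    (G : ℝ → ℝ) (hG : ∀ y, G y = ∑' (n : ℕ), gc n * y ^ n)
    (G' : ℝ → ℝ) (hG' : ∀ y, G' y = ∑' (n : ℕ), ((n : ℝ) + 1) * gc (n + 1) * y ^ n)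
    (F : ℝ → ℝ) (hF : ∀ z, F z = ∑' (n : ℕ), fc n * z ^ n)
    (F' : ℝ → ℝ) (hF' : ∀ z, F' z = ∑' (n : ℕ), ((n : ℝ) + 1) * fc (n + 1) * z ^ n)
    -- g is analytic at the relevant values f(z), z ∈ (0,ρ):
    (hGconv : ∀ z ∈ Ioo 0 ρ, Summable fun n : ℕ => gc n * F z ^ n)
    (hG'conv : ∀ z ∈ Ioo 0 ρ, Summable fun n : ℕ => ((n : ℝ) + 1) * gc (n + 1) * F z ^ n)
    -- f' > 0 on (0,ρ):
    (hF'pos : ∀ z ∈ Ioo 0 ρ, 0 < F' z)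
    -- the functional equation f(z) = z exp(g(f(z))) on (0,ρ):
    (heq : ∀ z ∈ Ioo 0 ρ, F z = z * Real.exp (G (F z))) :
    ∀ z ∈ Ioo 0 ρ,
      (F' z = F z / z + G' (F z) * F' z * F z) ∧
        (0 < F z → G' (F z) ≤ 1 / F z) := by
  -- summability of fc-series inside (0,ρ)
  have hfsum : ∀ r : ℝ, 0 ≤ r → r < ρ → Summable fun n : ℕ => |fc n| * r ^ n := by
    intro r hr0 hrρ
    have h1 : ENNReal.ofReal r < seriesRadius fc := by
      rw [hradf]
      exact (ENNReal.ofReal_lt_ofReal_iff hρ).2 hrρ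
    unfold seriesRadius at h1
    rw [lt_iSup_iff] at h1
    obtain ⟨r'', h2⟩ := h1
    rw [lt_iSup_iff] at h2
    obtain ⟨hsum'', hlt⟩ := h2
    have hrr'' : r ≤ (r'' : ℝ) := by
      by_contra hcon
      push_neg at hcon
      have : (r'' : ℝ≥0∞) ≤ ENNReal.ofReal r := by
        rw [← ENNReal.ofReal_coe_nnreal]
        exact ENNReal.ofReal_le_ofReal hcon.le
      exact absurd hlt (not_lt.2 this)
    apply Summable.of_nonneg_of_le (fun n => by positivity) (fun n => ?_) hsum''
    exact mul_le_mul_of_nonneg_left (pow_le_pow_left₀ hr0 hrr'' n) (abs_nonneg _)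
  intro z hz
  obtain ⟨hz0, hzρ⟩ := hz
  -- F z nonneg and derivative of F at z
  have hFnonneg : ∀ w : ℝ, 0 ≤ w → 0 ≤ F w := by
    intro w hw
    rw [hF]
    exact tsum_nonneg fun n => mul_nonneg (hfc n) (pow_nonneg hw n)
  -- pick z' between z and ρ
  obtain ⟨z', hzz', hz'ρ⟩ : ∃ z', z < z' ∧ z' < ρ := ⟨(z + ρ) / 2, by linarith, by linarith⟩
  have hz'0 : 0 < z' := lt_trans hz0 hzz'
  have hz'mem : z' ∈ Ioo 0 ρ := ⟨hz'0, hz'ρ⟩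
  -- HasDerivAt F (F' z) z
  have hFderiv : HasDerivAt F (F' z) z := by
    have h1 := hasDerivAt_tsum_pow fc (r := z') (x := z)
      (by rw [abs_of_nonneg hz0.le]; exact hzz') (hfsum z' hz'0.le hz'ρ)
    have : HasDerivAt F (∑' n : ℕ, ((n : ℝ) + 1) * fc (n + 1) * z ^ n) z := by
      apply h1.congr_of_eventuallyEq
      filter_upwards with w
      rw [hF]
    rwa [← hF'] at this
  -- some positive coefficient of fc at index ≥ 1
  obtain ⟨m, hm⟩ : ∃ m, 0 < fc (m + 1) := by
    by_contra hcon
    push_neg at hcon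
    have hall : ∀ n, fc (n + 1) = 0 := fun n => le_antisymm (hcon n) (hfc (n + 1))
    have : F' z = 0 := by
      rw [hF']
      have hfun : (fun n : ℕ => ((n : ℝ) + 1) * fc (n + 1) * z ^ n) = fun _ => 0 :=
        funext fun n => by rw [hall n]; ring
      rw [hfun, tsum_zero]
    exact absurd (hF'pos z ⟨hz0, hzρ⟩) (by rw [this]; exact lt_irrefl 0)
  -- strict monotonicity: F z < F z'
  have hFmono : F z < F z' := by
    rw [hF z, hF z']
    have hsz : Summable fun n : ℕ => fc n * z ^ n := by
      apply Summable.of_nonneg_of_le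
        (fun n => mul_nonneg (hfc n) (pow_nonneg hz0.le n)) (fun n => ?_)
        (hfsum z hz0.le hzρ)
      rw [abs_of_nonneg (hfc n)]
    have hsz' : Summable fun n : ℕ => fc n * z' ^ n := by
      apply Summable.of_nonneg_of_le
        (fun n => mul_nonneg (hfc n) (pow_nonneg hz'0.le n)) (fun n => ?_)
        (hfsum z' hz'0.le hz'ρ)
      rw [abs_of_nonneg (hfc n)]
    refine Summable.tsum_lt_tsum (i := m + 1) (fun n => ?_) ?_ hsz hsz'
    · exact mul_le_mul_of_nonneg_left (pow_le_pow_left₀ hz0.le hzz'.le n) (hfc n)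
    · refine mul_lt_mul_of_pos_left ?_ hm
      exact pow_lt_pow_left₀ hzz' hz0.le (Nat.succ_ne_zero m)
  have hFz0 : 0 ≤ F z := hFnonneg z hz0.le
  -- HasDerivAt G (G' (F z)) (F z)
  have hGderiv : HasDerivAt G (G' (F z)) (F z) := by
    have hgsum : Summable fun n : ℕ => |gc n| * F z' ^ n := by
      have := hGconv z' hz'mem
      apply this.congr
      intro n
      rw [abs_of_nonneg (hgc n)]
    have h1 := hasDerivAt_tsum_pow gc (r := F z') (x := F z)
      (by rw [abs_of_nonneg hFz0]; exact hFmono) hgsum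
    have : HasDerivAt G (∑' n : ℕ, ((n : ℝ) + 1) * gc (n + 1) * F z ^ n) (F z) := by
      apply h1.congr_of_eventuallyEq
      filter_upwards with w
      rw [hG]
    rwa [← hG'] at this
  -- differentiate the functional equation
  set e : ℝ := Real.exp (G (F z)) with he_def
  have hRHSderiv : HasDerivAt (fun w => w * Real.exp (G (F w)))
      (1 * Real.exp (G (F z)) + z * (Real.exp (G (F z)) * (G' (F z) * F' z))) z := by
    have hcomp : HasDerivAt (fun w => G (F w)) (G' (F z) * F' z) z :=
      hGderiv.comp z hFderiv
    have hexp : HasDerivAt (fun w => Real.exp (G (F w)))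
        (Real.exp (G (F z)) * (G' (F z) * F' z)) z :=
      hcomp.exp
    exact (hasDerivAt_id z).mul hexp
  have hFeq : HasDerivAt F
      (1 * Real.exp (G (F z)) + z * (Real.exp (G (F z)) * (G' (F z) * F' z))) z := by
    apply hRHSderiv.congr_of_eventuallyEq
    have hmem : Ioo 0 ρ ∈ 𝓝 z := Ioo_mem_nhds hz0 hzρ
    filter_upwards [hmem] with w hw
    exact heq w hw
  have hkey : F' z = Real.exp (G (F z)) + z * Real.exp (G (F z)) * (G' (F z) * F' z) := by
    have huniq := hFderiv.unique hFeq
    linear_combination huniq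
  have hfunc := heq z ⟨hz0, hzρ⟩
  have hexpeq : Real.exp (G (F z)) = F z / z := by
    rw [eq_div_iff hz0.ne']
    linear_combination -hfunc
  have hid : F' z = F z / z + G' (F z) * F' z * F z := by
    linear_combination hkey + hexpeq - G' (F z) * F' z * hfunc
  refine ⟨hid, fun hFpos => ?_⟩
  have hF'z := hF'pos z ⟨hz0, hzρ⟩
  have h2 : 0 < F z / z := div_pos hFpos hz0
  have h5 : 1 - G' (F z) * F z = (F z / z) / F' z := by
    rw [eq_div_iff hF'z.ne']
    linear_combination hid
  have h6 : 0 < (F z / z) / F' z := div_pos h2 hF'z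
  rw [le_div_iff₀ hFpos]
  linarith [h5, h6]
end

section
/- The generating function T(y) of rooted plane trees with no node of degree 2, satisfying T(y) = (T(y)+y)²/(1−y−T(y)), equals T(y) = (1 − 3y − √(y² − 6y + 1))/4, and has a square-root singularity at its radius of convergence ρ_T = 3 − 2√2. -/
open PowerSeries Set ENNReal


private lemma sq_sqrt2 : Real.sqrt 2 ^ 2 = 2 := Real.sq_sqrt (by norm_num)

private lemma sqrt2_lt : Real.sqrt 2 < 3/2 := by
  nlinarith [sq_sqrt2, Real.sqrt_nonneg 2]

private lemma sqrt2_gt : 7/5 < Real.sqrt 2 := by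
  nlinarith [sq_sqrt2, Real.sqrt_nonneg 2]

private lemma cauchy_partial (u : ℕ → ℝ) (hnn : ∀ n, 0 ≤ u n) (h0 : u 0 = 0) (N : ℕ) :
    ∑ n ∈ Finset.range (N+1), ∑ p ∈ Finset.HasAntidiagonal.antidiagonal n, u p.1 * u p.2
      ≤ (∑ k ∈ Finset.range N, u k)^2 := by
  have hdisj : (↑(Finset.range (N+1)) : Set ℕ).PairwiseDisjoint Finset.HasAntidiagonal.antidiagonal := by
    intro m _ n _ hmn
    simp only [Finset.disjoint_left, Finset.HasAntidiagonal.mem_antidiagonal]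
    rintro p hp hq
    exact hmn (hp ▸ hq)
  rw [← Finset.sum_biUnion hdisj, sq, Finset.sum_mul_sum, ← Finset.sum_product']
  rw [← Finset.sum_filter_of_ne
    (p := fun p : ℕ × ℕ => p.1 ≠ 0 ∧ p.2 ≠ 0)
    (f := fun p : ℕ × ℕ => u p.1 * u p.2)
    (by
      intro p _ hne
      simp only [ne_eq] at hne ⊢
      constructor
      · intro h1; exact hne (by rw [show u p.1 = 0 by rw [h1, h0], zero_mul])
      · intro h2; exact hne (by rw [show u p.2 = 0 by rw [h2, h0], mul_zero]))]
  apply Finset.sum_le_sum_of_subset_of_nonneg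
  · intro p hp
    simp only [Finset.mem_filter, Finset.mem_biUnion, Finset.mem_range,
      Finset.HasAntidiagonal.mem_antidiagonal, Finset.mem_product] at hp ⊢
    obtain ⟨⟨n, hn, hpn⟩, h1, h2⟩ := hp
    omega
  · intro p _ _
    exact mul_nonneg (hnn _) (hnn _)

private lemma root_facts {y : ℝ} (hy0 : 0 ≤ y) (hy : y < 3 - 2*Real.sqrt 2) :
    0 < y^2 - 6*y + 1 ∧ 0 < Real.sqrt (y^2 - 6*y + 1) ∧
    0 ≤ (1 - 3*y - Real.sqrt (y^2-6*y+1))/4 ∧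
    2*((1-3*y-Real.sqrt (y^2-6*y+1))/4)^2 + 3*y*((1-3*y-Real.sqrt (y^2-6*y+1))/4) + y^2
      = (1-3*y-Real.sqrt (y^2-6*y+1))/4 := by
  have hD : 0 < y^2 - 6*y + 1 := by
    nlinarith [sq_sqrt2, Real.sqrt_nonneg 2, sq_nonneg (3 - 2*Real.sqrt 2 - y),
      mul_pos (show (0:ℝ) < 3 - 2*Real.sqrt 2 - y by nlinarith [sqrt2_lt])
        (Real.sqrt_pos.mpr (show (0:ℝ) < 2 by norm_num))]
  have hs2 : Real.sqrt (y^2 - 6*y + 1) ^ 2 = y^2 - 6*y + 1 := Real.sq_sqrt hD.le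
  have hspos : 0 < Real.sqrt (y^2 - 6*y + 1) := Real.sqrt_pos.mpr hD
  have h13 : 0 < 1 - 3*y := by nlinarith [sqrt2_gt]
  have hsle : Real.sqrt (y^2 - 6*y + 1) ≤ 1 - 3*y := by
    have : y^2 - 6*y + 1 ≤ (1 - 3*y)^2 := by nlinarith [sq_nonneg y]
    calc Real.sqrt (y^2 - 6*y + 1) ≤ Real.sqrt ((1-3*y)^2) := Real.sqrt_le_sqrt this
    _ = 1 - 3*y := by rw [Real.sqrt_sq h13.le]
  refine ⟨hD, hspos, by linarith, ?_⟩
  linear_combination hs2 / 8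

private lemma per_n_mul (a : ℕ → ℝ) (y : ℝ) (n : ℕ) :
    (∑ p ∈ Finset.HasAntidiagonal.antidiagonal n, a p.1 * a p.2) * y^n
      = ∑ p ∈ Finset.HasAntidiagonal.antidiagonal n, (a p.1 * y^p.1) * (a p.2 * y^p.2) := by
  rw [Finset.sum_mul]
  refine Finset.sum_congr rfl fun p hp => ?_
  rw [Finset.HasAntidiagonal.mem_antidiagonal] at hp
  rw [← hp, pow_add]; ring

private lemma partial_bound (a : ℕ → ℝ) (ha0 : a 0 = 0) (hnn : ∀ n, 0 ≤ a n)
    (hrec : ∀ n, a n = 2 * (∑ p ∈ Finset.HasAntidiagonal.antidiagonal n, a p.1 * a p.2)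
        + 3 * a (n - 1) + (if n = 2 then 1 else 0))
    {y t : ℝ} (hy0 : 0 ≤ y) (ht : 0 ≤ t) (hroot : 2*t^2 + 3*y*t + y^2 = t) :
    ∀ N, ∑ n ∈ Finset.range N, a n * y^n ≤ t := by
  intro N
  induction N with
  | zero => simpa using ht
  | succ N ih =>
    set S := ∑ n ∈ Finset.range N, a n * y^n with hS
    have hS0 : 0 ≤ S := Finset.sum_nonneg fun n _ => mul_nonneg (hnn n) (pow_nonneg hy0 n)
    have hsplit : ∑ n ∈ Finset.range (N+1), a n * y^n
        = 2 * (∑ n ∈ Finset.range (N+1), (∑ p ∈ Finset.HasAntidiagonal.antidiagonal n, a p.1 * a p.2) * y^n)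
          + 3 * (∑ n ∈ Finset.range (N+1), a (n-1) * y^n)
          + ∑ n ∈ Finset.range (N+1), (if n = 2 then 1 else 0) * y^n := by
      rw [Finset.mul_sum, Finset.mul_sum, ← Finset.sum_add_distrib, ← Finset.sum_add_distrib]
      refine Finset.sum_congr rfl fun n _ => ?_
      rw [hrec n]; ring
    have hA : ∑ n ∈ Finset.range (N+1), (∑ p ∈ Finset.HasAntidiagonal.antidiagonal n, a p.1 * a p.2) * y^n
        ≤ S^2 := by
      calc ∑ n ∈ Finset.range (N+1), (∑ p ∈ Finset.HasAntidiagonal.antidiagonal n, a p.1 * a p.2) * y^n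
          = ∑ n ∈ Finset.range (N+1), ∑ p ∈ Finset.HasAntidiagonal.antidiagonal n,
              (a p.1 * y^p.1) * (a p.2 * y^p.2) :=
            Finset.sum_congr rfl fun n _ => per_n_mul a y n
        _ ≤ S^2 := cauchy_partial (fun k => a k * y^k)
            (fun k => mul_nonneg (hnn k) (pow_nonneg hy0 k)) (by simp [ha0]) N
    have hB : ∑ n ∈ Finset.range (N+1), a (n-1) * y^n = y * S := by
      rw [Finset.sum_range_succ']
      simp only [Nat.add_sub_cancel, Nat.zero_sub, ha0, pow_zero, mul_one, zero_mul, add_zero]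
      rw [Finset.mul_sum]
      refine Finset.sum_congr rfl fun n _ => ?_
      rw [pow_succ]; ring
    have hC : ∑ n ∈ Finset.range (N+1), (if n = 2 then 1 else 0) * y^n ≤ y^2 := by
      have : ∀ n, (if n = 2 then (1:ℝ) else 0) * y^n = if n = 2 then y^n else 0 := by
        intro n; split <;> simp
      simp only [this]
      rw [Finset.sum_ite_eq' (Finset.range (N+1)) 2 (fun n => y^n)]
      split
      · exact le_refl _
      · positivity
    have hstep : ∑ n ∈ Finset.range (N+1), a n * y^n ≤ 2*S^2 + 3*(y*S) + y^2 := by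
      rw [hsplit, hB]; linarith [hA, hC]
    nlinarith [mul_le_mul ih ih hS0 ht, mul_le_mul_of_nonneg_left ih hy0]

private lemma key_summable (a : ℕ → ℝ) (ha0 : a 0 = 0) (hnn : ∀ n, 0 ≤ a n)
    (hrec : ∀ n, a n = 2 * (∑ p ∈ Finset.HasAntidiagonal.antidiagonal n, a p.1 * a p.2)
        + 3 * a (n - 1) + (if n = 2 then 1 else 0))
    {y : ℝ} (hy0 : 0 ≤ y) (hy : y < 3 - 2*Real.sqrt 2) :
    Summable (fun n => a n * y^n) := by
  obtain ⟨hD, hspos, htnn, hroot⟩ := root_facts hy0 hy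
  exact summable_of_sum_range_le (fun n => mul_nonneg (hnn n) (pow_nonneg hy0 n))
    (partial_bound a ha0 hnn hrec hy0 htnn hroot)

private lemma key_quadratic (a : ℕ → ℝ) (ha0 : a 0 = 0) (hnn : ∀ n, 0 ≤ a n)
    (hrec : ∀ n, a n = 2 * (∑ p ∈ Finset.HasAntidiagonal.antidiagonal n, a p.1 * a p.2)
        + 3 * a (n - 1) + (if n = 2 then 1 else 0))
    {y : ℝ} (hy0 : 0 ≤ y) (hsum : Summable (fun n => a n * y^n)) :
    2*(∑' n, a n * y^n)^2 + (3*y - 1)*(∑' n, a n * y^n) + y^2 = 0 := by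
  set u : ℕ → ℝ := fun n => a n * y^n with hu
  have hunn : ∀ n, 0 ≤ u n := fun n => mul_nonneg (hnn n) (pow_nonneg hy0 n)
  have hnorm : Summable (fun n => ‖u n‖) := by
    have : (fun n => ‖u n‖) = u := funext fun n => by
      rw [Real.norm_eq_abs, abs_of_nonneg (hunn n)]
    rw [this]; exact hsum
  set g := ∑' n, u n with hg
  have hc : Summable (fun n => ∑ p ∈ Finset.HasAntidiagonal.antidiagonal n, u p.1 * u p.2) :=
    (summable_norm_sum_mul_antidiagonal_of_summable_norm hnorm hnorm).of_norm
  have hsq : g * g = ∑' n, ∑ p ∈ Finset.HasAntidiagonal.antidiagonal n, u p.1 * u p.2 :=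
    tsum_mul_tsum_eq_tsum_sum_antidiagonal_of_summable_norm hnorm hnorm
  -- shifted series
  have hwsum : Summable (fun n => a (n-1) * y^n) := by
    rw [← summable_nat_add_iff 1]
    have : (fun n => a (n+1-1) * y^(n+1)) = fun n => y * u n := by
      funext n; simp only [Nat.add_sub_cancel, hu, pow_succ]; ring
    rw [this]
    exact hsum.mul_left y
  have hwtsum : ∑' n, a (n-1) * y^n = y * g := by
    rw [Summable.tsum_eq_zero_add hwsum]
    simp only [Nat.zero_sub, ha0, pow_zero, mul_one, zero_mul, zero_add, Nat.add_sub_cancel]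
    have : (fun n => a n * y^(n+1)) = fun n => y * u n := by
      funext n; simp only [hu, pow_succ]; ring
    rw [this, tsum_mul_left]
  have hdsum : Summable (fun n => (if n = 2 then (1:ℝ) else 0) * y^n) := by
    apply summable_of_ne_finset_zero (s := {2})
    intro n hn
    simp only [Finset.mem_singleton] at hn
    simp [hn]
  have hdtsum : ∑' n, (if n = 2 then (1:ℝ) else 0) * y^n = y^2 := by
    rw [tsum_eq_single 2]
    · simp
    · intro n hn; simp [hn]
  have hmain : g = 2 * (g * g) + 3 * (y * g) + y^2 := by
    calc g = ∑' n, u n := rfl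
      _ = ∑' n, (2 * (∑ p ∈ Finset.HasAntidiagonal.antidiagonal n, u p.1 * u p.2)
            + 3 * (a (n-1) * y^n) + (if n = 2 then (1:ℝ) else 0) * y^n) := by
          refine tsum_congr fun n => ?_
          have h1 : u n = (2 * (∑ p ∈ Finset.HasAntidiagonal.antidiagonal n, a p.1 * a p.2)
              + 3 * a (n-1) + (if n = 2 then (1:ℝ) else 0)) * y^n := by
            rw [hu]; simp only []; rw [← hrec n]
          rw [h1, add_mul, add_mul, mul_assoc, per_n_mul a y n, mul_assoc]
      _ = 2 * (∑' n, ∑ p ∈ Finset.HasAntidiagonal.antidiagonal n, u p.1 * u p.2)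
            + 3 * (∑' n, a (n-1) * y^n) + ∑' n, (if n = 2 then (1:ℝ) else 0) * y^n := by
          rw [Summable.tsum_add (((hc.mul_left 2).add ((hwsum.mul_left 3)))) hdsum,
            Summable.tsum_add (hc.mul_left 2) (hwsum.mul_left 3), tsum_mul_left, tsum_mul_left]
      _ = 2 * (g * g) + 3 * (y * g) + y^2 := by rw [← hsq, hwtsum, hdtsum]
  linear_combination -hmain

private lemma key_tsum (a : ℕ → ℝ) (ha0 : a 0 = 0) (hnn : ∀ n, 0 ≤ a n)
    (hrec : ∀ n, a n = 2 * (∑ p ∈ Finset.HasAntidiagonal.antidiagonal n, a p.1 * a p.2)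
        + 3 * a (n - 1) + (if n = 2 then 1 else 0))
    {y : ℝ} (hy0 : 0 ≤ y) (hy : y < 3 - 2*Real.sqrt 2) :
    ∑' n, a n * y^n = (1 - 3*y - Real.sqrt (y^2 - 6*y + 1))/4 := by
  obtain ⟨hD, hspos, htnn, hroot⟩ := root_facts hy0 hy
  have hsum := key_summable a ha0 hnn hrec hy0 hy
  set s := Real.sqrt (y^2 - 6*y + 1) with hs
  set t := (1 - 3*y - s)/4 with ht
  set g := ∑' n, a n * y^n with hg
  have hgle : g ≤ t := Real.tsum_le_of_sum_range_le
    (fun n => mul_nonneg (hnn n) (pow_nonneg hy0 n))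
    (partial_bound a ha0 hnn hrec hy0 htnn hroot)
  have hq := key_quadratic a ha0 hnn hrec hy0 hsum
  rw [← hg] at hq
  have hqt : 2*t^2 + (3*y-1)*t + y^2 = 0 := by linear_combination hroot
  have hfac : (g - t) * (2*(g+t) + (3*y-1)) = 0 := by linear_combination hq - hqt
  rcases mul_eq_zero.mp hfac with h | h
  · have := sub_eq_zero.mp h
    rw [this, ht]
  · exfalso
    have h4t : 4*t = 1 - 3*y - s := by rw [ht]; ring
    linarith

/-- The generating function `T(y)` of rooted plane trees with no node of
degree 2, i.e. the power series with `T(0)=0`, nonnegative coefficients satisfying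
`T·(1 − y − T) = (T + y)²`, equals `(1 − 3y − √(y² − 6y + 1))/4` on `[0, ρ_T)` and has its
radius of convergence (a square-root singularity, where the discriminant vanishes) at
`ρ_T = 3 − 2√2`. -/
theorem dissection_tree_series_closed_form
    (T : PowerSeries ℝ)
    (hT0 : PowerSeries.constantCoeff T = 0)
    (hTnonneg : ∀ n, 0 ≤ PowerSeries.coeff n T)
    (halg : T * (1 - PowerSeries.X - T) = (T + PowerSeries.X) ^ 2) :
    (∀ y ∈ Ico (0 : ℝ) (3 - 2 * Real.sqrt 2),
        ∑' (n : ℕ), PowerSeries.coeff n T * y ^ n =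
          (1 - 3 * y - Real.sqrt (y ^ 2 - 6 * y + 1)) / 4) ∧
      seriesRadius (fun n => PowerSeries.coeff n T) =
        ENNReal.ofReal (3 - 2 * Real.sqrt 2) ∧
      (3 - 2 * Real.sqrt 2) ^ 2 - 6 * (3 - 2 * Real.sqrt 2) + 1 = 0 := by
  have ha0 : PowerSeries.coeff 0 T = 0 := by
    rw [PowerSeries.coeff_zero_eq_constantCoeff, hT0]
  have hps : T = PowerSeries.C 2 * T^2 + PowerSeries.C 3 * (PowerSeries.X * T)
      + PowerSeries.X^2 := by
    have h2 : (PowerSeries.C) 2 = (2 : PowerSeries ℝ) := map_ofNat _ 2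
    have h3 : (PowerSeries.C) 3 = (3 : PowerSeries ℝ) := map_ofNat _ 3
    rw [h2, h3]
    linear_combination halg
  have hrec : ∀ n, PowerSeries.coeff n T
      = 2 * (∑ p ∈ Finset.HasAntidiagonal.antidiagonal n, PowerSeries.coeff p.1 T * PowerSeries.coeff p.2 T)
        + 3 * PowerSeries.coeff (n-1) T + (if n = 2 then 1 else 0) := by
    intro n
    have h := congrArg (PowerSeries.coeff n) hps
    rw [map_add, map_add, PowerSeries.coeff_C_mul, PowerSeries.coeff_C_mul,
      PowerSeries.coeff_X_pow, sq, PowerSeries.coeff_mul] at h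
    cases n with
    | zero =>
      simpa [ha0, PowerSeries.coeff_zero_eq_constantCoeff, map_mul] using h
    | succ m =>
      rw [PowerSeries.coeff_succ_X_mul] at h
      simpa using h
  have hρpos : 0 < 3 - 2*Real.sqrt 2 := by nlinarith [sqrt2_lt]
  refine ⟨?_, ?_, by linear_combination (4:ℝ) * sq_sqrt2⟩
  · rintro y ⟨hy0, hylt⟩
    exact key_tsum (fun n => PowerSeries.coeff n T) ha0 hTnonneg hrec hy0 hylt
  · rw [seriesRadius]
    apply le_antisymm
    · apply iSup₂_le
      intro r hr
      have habs : (fun n => |PowerSeries.coeff n T| * (r:ℝ)^n)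
          = fun n => PowerSeries.coeff n T * (r:ℝ)^n :=
        funext fun n => by rw [abs_of_nonneg (hTnonneg n)]
      rw [habs] at hr
      have hle : (r:ℝ) ≤ 3 - 2*Real.sqrt 2 := by
        by_contra hlt
        push_neg at hlt
        set z := min (r:ℝ) 1 with hz
        have hz0 : 0 ≤ z := le_min r.coe_nonneg zero_le_one
        have hzle : z ≤ (r:ℝ) := min_le_left _ _
        have hz1 : z ≤ 1 := min_le_right _ _
        have hzgt : 3 - 2*Real.sqrt 2 < z := lt_min hlt (by nlinarith [sqrt2_gt])
        have hzsum : Summable (fun n => PowerSeries.coeff n T * z^n) := by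
          refine Summable.of_nonneg_of_le
            (fun n => mul_nonneg (hTnonneg n) (pow_nonneg hz0 n)) (fun n => ?_) hr
          exact mul_le_mul_of_nonneg_left (pow_le_pow_left₀ hz0 hzle n) (hTnonneg n)
        have hq := key_quadratic (fun n => PowerSeries.coeff n T) ha0 hTnonneg hrec hz0 hzsum
        set g := ∑' n, PowerSeries.coeff n T * z^n with hgdef
        have hDz : 0 ≤ z^2 - 6*z + 1 := by nlinarith [sq_nonneg (4*g + 3*z - 1)]
        have h1 : 0 < z - (3 - 2*Real.sqrt 2) := by linarith
        have h2 : 0 < 3 + 2*Real.sqrt 2 - z := by nlinarith [sqrt2_gt]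
        nlinarith [mul_pos h1 h2, sq_sqrt2]
      calc (r : ℝ≥0∞) = ENNReal.ofReal (r:ℝ) := ENNReal.ofReal_coe_nnreal.symm
        _ ≤ _ := ENNReal.ofReal_le_ofReal hle
    · by_contra hcon
      push_neg at hcon
      obtain ⟨w, hw0, hlt1, hlt2⟩ := ENNReal.lt_iff_exists_real_btwn.mp hcon
      have hwρ : w < 3 - 2*Real.sqrt 2 := (ENNReal.ofReal_lt_ofReal_iff hρpos).mp hlt2
      have hwsum : Summable (fun n => PowerSeries.coeff n T * w^n) :=
        key_summable (fun n => PowerSeries.coeff n T) ha0 hTnonneg hrec hw0 hwρ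
      have hcoe : ((w.toNNReal : NNReal) : ℝ) = w := Real.coe_toNNReal w hw0
      have hW : Summable (fun n => |PowerSeries.coeff n T| * ((w.toNNReal : NNReal) : ℝ)^n) := by
        simp only [hcoe]
        have habs : (fun n => |PowerSeries.coeff n T| * w^n)
            = fun n => PowerSeries.coeff n T * w^n :=
          funext fun n => by rw [abs_of_nonneg (hTnonneg n)]
        rw [habs]
        exact hwsum
      have hsup : ENNReal.ofReal w
          ≤ ⨆ (r : NNReal) (_ : Summable fun n => |PowerSeries.coeff n T| * (r:ℝ)^n),
            (r : ℝ≥0∞) := by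
        have := le_iSup₂
          (f := fun (r : NNReal) (_ : Summable fun n => |PowerSeries.coeff n T| * (r:ℝ)^n)
            => (r : ℝ≥0∞)) w.toNNReal hW
        simpa [ENNReal.ofReal] using this
      exact lt_irrefl _ (lt_of_lt_of_le hlt1 hsup)
end

section
/- Let F(y;z) be a bivariate function analytic at (y₀, z₀) with nonnegative Taylor coefficients, F(0;z) ≠ 0, F nonlinear in y, and suppose y(z) is a power series with nonnegative coefficients satisfying y = F(y;z), finite limit y₀ = y(z₀) at its radius of convergence z₀, with F_y(y₀; z₀) = 1 and F_{yy}(y₀;z₀) ≠ 0, F_z(y₀;z₀) ≠ 0. Then y(z₀) − y(z) ~ C·√(1 − z/z₀) as z → z₀⁻ along the reals, where C = √(2 z₀ F_z(y₀;z₀) / F_{yy}(y₀;z₀)). -/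
open Filter Set Topology ENNReal

private lemma analyticAt_deriv' {g : ℝ → ℝ} {x : ℝ} (hg : AnalyticAt ℝ g x) :
    AnalyticAt ℝ (deriv g) x :=
  (AnalyticOnNhd.deriv (s := {y | AnalyticAt ℝ g y}) (fun _ h => h)) x hg

/-- Second-order Taylor limit for an analytic function vanishing to order ≥ 2. -/
private lemma quad_limit {g : ℝ → ℝ} {x₀ : ℝ} (hg : AnalyticAt ℝ g x₀) (h0 : g x₀ = 0)
    (h1 : deriv g x₀ = 0) :
    Tendsto (fun t => g t / (t - x₀) ^ 2) (𝓝[≠] x₀) (𝓝 (deriv (deriv g) x₀ / 2)) := by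
  have hev : ∀ᶠ t in 𝓝 x₀, AnalyticAt ℝ g t := hg.eventually_analyticAt
  apply HasDerivAt.lhopital_zero_nhdsNE (f' := deriv g) (g' := fun t => 2 * (t - x₀))
  · exact ((hev.mono fun t ht => ht.differentiableAt.hasDerivAt).filter_mono nhdsWithin_le_nhds)
  · filter_upwards with t
    have := ((hasDerivAt_id t).sub_const x₀).fun_pow 2
    simpa [mul_comm] using this
  · filter_upwards [self_mem_nhdsWithin] with t ht
    have : t - x₀ ≠ 0 := sub_ne_zero.mpr ht
    positivity
  · have := hg.continuousAt.tendsto.mono_left (nhdsWithin_le_nhds (s := {x₀}ᶜ))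
    rwa [h0] at this
  · have : Tendsto (fun t : ℝ => (t - x₀) ^ 2) (𝓝 x₀) (𝓝 ((x₀ - x₀) ^ 2)) :=
      ((continuous_id.sub continuous_const).pow 2).tendsto x₀
    simpa using this.mono_left nhdsWithin_le_nhds
  · -- second L'Hôpital
    apply HasDerivAt.lhopital_zero_nhdsNE (f' := deriv (deriv g)) (g' := fun _ => (2 : ℝ))
    · exact ((hev.mono fun t ht =>
        (analyticAt_deriv' ht).differentiableAt.hasDerivAt).filter_mono nhdsWithin_le_nhds)
    · filter_upwards with t
      simpa using ((hasDerivAt_id t).sub_const x₀).const_mul (2 : ℝ)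
    · filter_upwards with t; norm_num
    · have := (analyticAt_deriv' hg).continuousAt.tendsto.mono_left
        (nhdsWithin_le_nhds (s := {x₀}ᶜ))
      rwa [h1] at this
    · have : Tendsto (fun t : ℝ => 2 * (t - x₀)) (𝓝 x₀) (𝓝 (2 * (x₀ - x₀))) :=
        (continuous_const.mul (continuous_id.sub continuous_const)).tendsto x₀
      simpa using this.mono_left nhdsWithin_le_nhds
    · exact ((analyticAt_deriv' (analyticAt_deriv' hg)).continuousAt.tendsto.div_const 2
        ).mono_left nhdsWithin_le_nhds

/-- Square-root singularity of the solution of `y = F(y;z)` (real-variable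
version of Drmota's theorem).  Let `F` be analytic at `(y₀,z₀)` with nonnegative Taylor
coefficients, `F(0;z₀) ≠ 0`, nonlinear in `y` (`F_yy(y₀;z₀) ≠ 0`), `F_z(y₀;z₀) ≠ 0`, and
let `Y(z) = Σ cₙ zⁿ` (nonnegative coefficients) satisfy `Y = F(Y;z)` on `[0,z₀)`, with
radius of convergence `z₀` and finite limit `y₀ = Y(z₀⁻)`, where `F_y(y₀;z₀) = 1`.  Then
`y₀ − Y(z) ~ C·√(1 − z/z₀)` as `z → z₀⁻`, with
`C = √(2 z₀ F_z(y₀;z₀) / F_yy(y₀;z₀))`. -/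
theorem square_root_singularity_of_functional_equation
    (F : ℝ → ℝ → ℝ) (c : ℕ → ℝ) (z₀ y₀ : ℝ)
    (hz₀ : 0 < z₀) (hy₀ : 0 < y₀)
    (hc : ∀ n, 0 ≤ c n)
    (hrad : seriesRadius c = ENNReal.ofReal z₀)
    (Y : ℝ → ℝ) (hY : ∀ z, Y z = ∑' (n : ℕ), c n * z ^ n)
    -- F is analytic at (y₀, z₀):
    (hFanal : AnalyticAt ℝ (fun p : ℝ × ℝ => F p.1 p.2) (y₀, z₀))
    -- F has nonnegative Taylor coefficients (as a convergent double series on [0,y₀]×[0,z₀]):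
    (hFnonneg : ∃ a : ℕ → ℕ → ℝ, (∀ n m, 0 ≤ a n m) ∧
      ∀ y z : ℝ, 0 ≤ y → y ≤ y₀ → 0 ≤ z → z ≤ z₀ →
        HasSum (fun p : ℕ × ℕ => a p.1 p.2 * y ^ p.1 * z ^ p.2) (F y z))
    (hF0 : F 0 z₀ ≠ 0)
    -- functional equation on [0, z₀):
    (heq : ∀ z ∈ Ico 0 z₀, Y z = F (Y z) z)
    -- finite limit y₀ at the singularity:
    (hlim : Tendsto Y (𝓝[<] z₀) (𝓝 y₀))
    -- characteristic condition F_y(y₀;z₀) = 1 and nondegeneracy: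
    (hFy : deriv (fun y => F y z₀) y₀ = 1)
    (hFyy : iteratedDeriv 2 (fun y => F y z₀) y₀ ≠ 0)
    (hFz : deriv (fun z => F y₀ z) z₀ ≠ 0) :
    Tendsto (fun z => (y₀ - Y z) / Real.sqrt (1 - z / z₀)) (𝓝[<] z₀)
      (𝓝 (Real.sqrt (2 * z₀ * deriv (fun z => F y₀ z) z₀ /
        iteratedDeriv 2 (fun y => F y z₀) y₀))) := by
  classical
  set Fc : ℝ × ℝ → ℝ := fun p => F p.1 p.2 with hFc
  set φ : ℝ × ℝ → ℝ := fun p => fderiv ℝ Fc p (0, 1) with hφ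
  set D1 : ℝ := deriv (fun z => F y₀ z) z₀ with hD1def
  set D2 : ℝ := iteratedDeriv 2 (fun y => F y z₀) y₀ with hD2def
  -- partial derivative in z of the slices
  have hslice : ∀ p : ℝ × ℝ, DifferentiableAt ℝ Fc p →
      HasDerivAt (fun ζ => F p.1 ζ) (φ p) p.2 := by
    intro p hp
    have h1 : HasDerivAt (fun ζ : ℝ => ((p.1 : ℝ), ζ)) ((0 : ℝ), (1 : ℝ)) p.2 :=
      HasDerivAt.prodMk (hasDerivAt_const _ _) (hasDerivAt_id _)
    exact hp.hasFDerivAt.comp_hasDerivAt p.2 h1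
  have hD1 : φ (y₀, z₀) = D1 := ((hslice (y₀, z₀) hFanal.differentiableAt).deriv).symm
  have hφcont : ContinuousAt φ (y₀, z₀) := by
    exact ((ContinuousLinearMap.apply ℝ ℝ (((0 : ℝ), (1 : ℝ)))).continuous.continuousAt).comp
      hFanal.fderiv.continuousAt
  -- y-slice
  have g1anal : AnalyticAt ℝ (fun y => F y z₀) y₀ :=
    hFanal.comp₂ analyticAt_id analyticAt_const
  -- basic eventualities
  haveI : (𝓝[<] z₀).NeBot := nhdsLT_neBot z₀
  have hIoo : Ioo 0 z₀ ∈ 𝓝[<] z₀ := Ioo_mem_nhdsLT_of_mem ⟨hz₀, le_rfl⟩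
  have hIco : ∀ᶠ z in 𝓝[<] z₀, z ∈ Ico 0 z₀ := by
    filter_upwards [hIoo] with z hz; exact ⟨hz.1.le, hz.2⟩
  have hYZtend : Tendsto (fun z => ((Y z : ℝ), z)) (𝓝[<] z₀) (𝓝 (y₀, z₀)) :=
    hlim.prodMk_nhds (tendsto_id.mono_left nhdsWithin_le_nhds)
  -- fixed point: F y₀ z₀ = y₀
  have hfix : F y₀ z₀ = y₀ := by
    have t1 : Tendsto (fun z => F (Y z) z) (𝓝[<] z₀) (𝓝 (F y₀ z₀)) :=
      (hFanal.continuousAt.tendsto).comp hYZtend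
    have t2 : Tendsto (fun z => F (Y z) z) (𝓝[<] z₀) (𝓝 y₀) := by
      refine hlim.congr' ?_
      filter_upwards [hIco] with z hz using heq z hz
    exact tendsto_nhds_unique t1 t2
  -- the one-variable function h
  set h : ℝ → ℝ := fun y => F y z₀ - y with hh
  have hanal : AnalyticAt ℝ h y₀ := g1anal.sub analyticAt_id
  have h0 : h y₀ = 0 := by simp [hh, hfix]
  have hderiv_eq : ∀ y, AnalyticAt ℝ (fun y => F y z₀) y →
      deriv h y = deriv (fun y => F y z₀) y - 1 := by
    intro y hy
    have : deriv h y = deriv (fun y => F y z₀) y - deriv (fun y : ℝ => y) y :=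
      deriv_fun_sub hy.differentiableAt differentiableAt_fun_id
    simpa using this
  have h1 : deriv h y₀ = 0 := by rw [hderiv_eq y₀ g1anal, hFy]; ring
  have h2 : deriv (deriv h) y₀ = D2 := by
    have hee : deriv h =ᶠ[𝓝 y₀] fun y => deriv (fun y => F y z₀) y - 1 :=
      g1anal.eventually_analyticAt.mono hderiv_eq
    have : deriv (deriv h) y₀ = deriv (fun y => deriv (fun y => F y z₀) y - 1) y₀ :=
      hee.deriv_eq
    rw [this, deriv_sub_const, hD2def, iteratedDeriv_succ, iteratedDeriv_one]
  -- Claim 1: Taylor limit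
  have claim1 : Tendsto (fun t => h t / (t - y₀) ^ 2) (𝓝[≠] y₀) (𝓝 (D2 / 2)) := by
    have := quad_limit hanal h0 h1
    rwa [h2] at this
  -- summability and monotonicity of Y
  have hsum : ∀ z : ℝ, 0 ≤ z → z < z₀ → Summable (fun n => c n * z ^ n) := by
    intro z hz hz'
    have hlt : (ENNReal.ofReal z) < seriesRadius c := by
      rw [hrad]
      exact ENNReal.ofReal_lt_ofReal_iff hz₀ |>.mpr hz'
    rw [seriesRadius, lt_iSup_iff] at hlt
    obtain ⟨r', hr'⟩ := hlt
    rw [lt_iSup_iff] at hr'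
    obtain ⟨hs, hlt2⟩ := hr'
    have hzr : z < (r' : ℝ) := by
      have := ENNReal.ofReal_lt_iff_lt_toReal hz (by simp) |>.mp hlt2
      simpa using this
    refine Summable.of_nonneg_of_le (fun n => mul_nonneg (hc n) (pow_nonneg hz n)) (fun n => ?_) hs
    rw [abs_of_nonneg (hc n)]
    exact mul_le_mul_of_nonneg_left (pow_le_pow_left₀ hz hzr.le n) (hc n)
  have hmono : ∀ z w : ℝ, 0 ≤ z → z ≤ w → w < z₀ → Y z ≤ Y w := by
    intro z w hz hzw hw
    rw [hY z, hY w]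
    exact Summable.tsum_le_tsum
      (fun n => mul_le_mul_of_nonneg_left (pow_le_pow_left₀ hz hzw n) (hc n))
      (hsum z hz (lt_of_le_of_lt hzw hw)) (hsum w (hz.trans hzw) hw)
  have hYle : ∀ z : ℝ, 0 ≤ z → z < z₀ → Y z ≤ y₀ := by
    intro z hz hz'
    refine ge_of_tendsto hlim ?_
    filter_upwards [Ioo_mem_nhdsLT_of_mem (⟨hz', le_rfl⟩ : z₀ ∈ Ioc z z₀)] with w hw
    exact hmono z w hz hw.1.le hw.2
  -- Claim 2: MVT quotient tends to D1
  set A : ℝ → ℝ := fun z => (F (Y z) z₀ - F (Y z) z) / (z₀ - z) with hA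
  have claim2 : Tendsto A (𝓝[<] z₀) (𝓝 D1) := by
    rw [Metric.tendsto_nhds]
    intro ε εpos
    obtain ⟨δ₁, hδ₁pos, hδ₁⟩ := Metric.continuousAt_iff.mp hφcont ε εpos
    obtain ⟨δ₂, hδ₂pos, hδ₂⟩ := Metric.eventually_nhds_iff.mp
      (hFanal.eventually_analyticAt.mono fun p hp => hp.differentiableAt)
    set δ := min δ₁ δ₂ with hδ
    have hδpos : 0 < δ := lt_min hδ₁pos hδ₂pos
    have hev1 : ∀ᶠ z in 𝓝[<] z₀, dist (Y z) y₀ < δ / 2 :=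
      (Metric.tendsto_nhds.mp hlim) (δ / 2) (by positivity)
    have hev2 : ∀ᶠ z in 𝓝[<] z₀, dist z z₀ < δ / 2 :=
      (Metric.tendsto_nhds.mp (tendsto_id.mono_left nhdsWithin_le_nhds)) (δ / 2) (by positivity)
    filter_upwards [hev1, hev2, self_mem_nhdsWithin] with z hz1 hz2 hz3
    have hzlt : z < z₀ := hz3
    have hball : ∀ ζ ∈ Icc z z₀, dist ((Y z, ζ) : ℝ × ℝ) (y₀, z₀) < δ := by
      intro ζ hζ
      rw [Prod.dist_eq]
      refine max_lt (lt_of_lt_of_le hz1 (by linarith)) ?_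
      have : dist ζ z₀ ≤ dist z z₀ := by
        rw [Real.dist_eq, Real.dist_eq]
        rw [abs_of_nonpos (by linarith [hζ.2]), abs_of_nonpos (by linarith)]
        linarith [hζ.1]
      linarith
    have hdiff : ∀ ζ ∈ Icc z z₀, HasDerivAt (fun ζ => F (Y z) ζ) (φ (Y z, ζ)) ζ := by
      intro ζ hζ
      exact hslice (Y z, ζ) (hδ₂ (lt_of_lt_of_le (hball ζ hζ) (min_le_right _ _)))
    obtain ⟨ξ, hξ, hslope⟩ := exists_hasDerivAt_eq_slope (fun ζ => F (Y z) ζ)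
      (fun ζ => φ (Y z, ζ)) hzlt
      (fun ζ hζ => (hdiff ζ hζ).continuousAt.continuousWithinAt)
      (fun ζ hζ => hdiff ζ (Ioo_subset_Icc_self hζ))
    have : A z = φ (Y z, ξ) := by
      rw [hA]; rw [hslope]
    rw [this, ← hD1]
    exact hδ₁ (lt_of_lt_of_le (hball ξ (Ioo_subset_Icc_self hξ)) (min_le_left _ _))
  have hD1ne : D1 ≠ 0 := hFz
  have hAne : ∀ᶠ z in 𝓝[<] z₀, A z ≠ 0 := claim2.eventually_ne hD1ne
  -- h (Y z) = (z₀ - z) * A z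
  have heqh : ∀ᶠ z in 𝓝[<] z₀, h (Y z) = (z₀ - z) * A z := by
    filter_upwards [hIco, self_mem_nhdsWithin] with z hz hz'
    have hzne : z₀ - z ≠ 0 := sub_ne_zero.mpr (ne_of_gt hz.2)
    have : h (Y z) = F (Y z) z₀ - F (Y z) z := by
      rw [hh]; simp only []
      rw [← heq z hz]
    rw [this, hA]
    field_simp
  have hYne : ∀ᶠ z in 𝓝[<] z₀, Y z ≠ y₀ := by
    filter_upwards [heqh, hAne, self_mem_nhdsWithin] with z hz hA0 hz' hcon
    rw [hcon, h0] at hz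
    have hzne : z₀ - z ≠ 0 := sub_ne_zero.mpr (ne_of_gt hz')
    exact (mul_ne_zero hzne hA0) hz.symm
  have hYtendP : Tendsto Y (𝓝[<] z₀) (𝓝[≠] y₀) := by
    rw [tendsto_nhdsWithin_iff]
    exact ⟨hlim, hYne⟩
  set B : ℝ → ℝ := fun z => h (Y z) / (Y z - y₀) ^ 2 with hB
  have hBtend : Tendsto B (𝓝[<] z₀) (𝓝 (D2 / 2)) := claim1.comp hYtendP
  have hD2half : (D2 : ℝ) / 2 ≠ 0 := by
    simp only [div_ne_zero_iff]; exact ⟨hFyy, two_ne_zero⟩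
  have hBne : ∀ᶠ z in 𝓝[<] z₀, B z ≠ 0 := hBtend.eventually_ne hD2half
  -- key limit
  have keyTend : Tendsto (fun z => (Y z - y₀) ^ 2 / (z₀ - z)) (𝓝[<] z₀)
      (𝓝 (D1 / (D2 / 2))) := by
    refine (claim2.div hBtend hD2half).congr' ?_
    filter_upwards [heqh, hAne, hYne, hBne, self_mem_nhdsWithin] with z hz hA0 hYz hB0 hz'
    have hzne : z₀ - z ≠ 0 := sub_ne_zero.mpr (ne_of_gt hz')
    have hYsq : (Y z - y₀) ^ 2 ≠ 0 := pow_ne_zero 2 (sub_ne_zero.mpr hYz)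
    simp only [Pi.div_apply, hB]
    rw [hz]
    field_simp
  -- final assembly
  have final : Tendsto (fun z => Real.sqrt (z₀ * ((Y z - y₀) ^ 2 / (z₀ - z)))) (𝓝[<] z₀)
      (𝓝 (Real.sqrt (z₀ * (D1 / (D2 / 2))))) :=
    (Real.continuous_sqrt.continuousAt.tendsto).comp (keyTend.const_mul z₀)
  have hval : Real.sqrt (z₀ * (D1 / (D2 / 2))) = Real.sqrt (2 * z₀ * D1 / D2) := by
    congr 1
    field_simp
  rw [← hval]
  refine final.congr' ?_
  filter_upwards [hIoo] with z hz
  have hz0 : (0 : ℝ) ≤ z := hz.1.le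
  have hzlt : z < z₀ := hz.2
  have hYz : Y z ≤ y₀ := hYle z hz0 hzlt
  have hzne : z₀ - z > 0 := by linarith
  have harg : z₀ * ((Y z - y₀) ^ 2 / (z₀ - z)) = (y₀ - Y z) ^ 2 / (1 - z / z₀) := by
    have h1 : (1 : ℝ) - z / z₀ = (z₀ - z) / z₀ := by field_simp
    rw [h1]
    rw [div_div_eq_mul_div]
    field_simp
    ring
  rw [harg, Real.sqrt_div (by positivity) _, Real.sqrt_sq (by linarith)]
end
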